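/- Suppose f : ℝ → ℝ² is integrable, f(ξ) ∈ D̃_ξ for a.e. ξ, and (ρ, ρu) = ∫_ℝ f(ξ) dξ. Then (ρ,u) lies in the macroscopic invariant domain D̃ = {(ρ,u) : ρ = 0 or ω_min ≤ u − a_γ ρ^θ and u + a_γ ρ^θ ≤ ω_max}. -/

import Mathlib

open MeasureTheory Real Set

noncomputable section

/-- J_λ = ∫_{-1}^1 (1-z²)^λ dz -/
def Jl (l : ℝ) : ℝ := ∫ z in (-1:ℝ)..1, (1 - z^2) ^ l

/-- θ = (γ-1)/2 -/
def th (γ : ℝ) : ℝ := (γ - 1) / 2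

/-- λ = 1/(γ-1) - 1/2 -/
def lam (γ : ℝ) : ℝ := 1 / (γ - 1) - 1 / 2

/-- a_γ = 2√(γκ)/(γ-1) -/
def ag (γ κ : ℝ) : ℝ := 2 * Real.sqrt (γ * κ) / (γ - 1)

/-- c_{γ,κ} = a_γ^{-2/(γ-1)} / J_λ -/
def cgk (γ κ : ℝ) : ℝ := ag γ κ ^ (-(2 / (γ - 1))) / Jl (lam γ)

/-- χ(ρ,ξ) = c_{γ,κ} (a_γ² ρ^{γ-1} - ξ²)_+^λ -/
def chi (γ κ ρ ξ : ℝ) : ℝ :=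
  cgk γ κ * (max (ag γ κ ^ 2 * ρ ^ (γ - 1) - ξ ^ 2) 0) ^ lam γ

/-- vector-valued Maxwellian -/
def Mx (γ κ ρ u ξ : ℝ) : ℝ × ℝ :=
  (chi γ κ ρ (ξ - u), ((1 - th γ) * u + th γ * ξ) * chi γ κ ρ (ξ - u))

/-- domain D = {f₀ > 0} ∪ {0} -/
def Dset : Set (ℝ × ℝ) := {f | 0 < f.1 ∨ f = 0}

/-- kinetic energy H(f,ξ) -/
def Hk (γ κ : ℝ) (f : ℝ × ℝ) (ξ : ℝ) : ℝ :=
  if f = 0 then 0 else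
    th γ / (1 - th γ) * (ξ ^ 2 / 2) * f.1
      + th γ / (2 * cgk γ κ ^ (1 / lam γ)) * (f.1 ^ (1 + 1 / lam γ) / (1 + 1 / lam γ))
      + 1 / (1 - th γ) * (1 / 2) * (f.2 ^ 2 / f.1)
      - th γ / (1 - th γ) * ξ * f.2

/-- u(f,ξ), inverse relation to f = M(ρ,u,ξ) -/
def uf (γ : ℝ) (f : ℝ × ℝ) (ξ : ℝ) : ℝ := (f.2 / f.1 - th γ * ξ) / (1 - th γ)

/-- ρ(f,ξ), inverse relation to f = M(ρ,u,ξ) -/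
def rf (γ κ : ℝ) (f : ℝ × ℝ) (ξ : ℝ) : ℝ :=
  ag γ κ ^ (-(2 / (γ - 1))) *
    (((f.2 / f.1 - ξ) / (1 - th γ)) ^ 2 + (f.1 / cgk γ κ) ^ (1 / lam γ)) ^ (1 / (γ - 1))

/-- kinetic Riemann invariant ω₁(f,ξ) -/
def om1 (γ κ : ℝ) (f : ℝ × ℝ) (ξ : ℝ) : ℝ :=
  uf γ f ξ - ag γ κ * rf γ κ f ξ ^ th γ

/-- kinetic Riemann invariant ω₂(f,ξ) -/
def om2 (γ κ : ℝ) (f : ℝ × ℝ) (ξ : ℝ) : ℝ :=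
  uf γ f ξ + ag γ κ * rf γ κ f ξ ^ th γ

/-- Υ_{l}(z) = ∫_1^z (y²-1)^l dy -/
def Ups (l z : ℝ) : ℝ := ∫ y in (1:ℝ)..z, (y ^ 2 - 1) ^ l

/-- entropy kernel Φ(ρ,u,ξ,v) -/
def Phi (γ κ ρ u ξ v : ℝ) : ℝ :=
  let w1 := u - ag γ κ * ρ ^ th γ
  let w2 := u + ag γ κ * ρ ^ th γ
  if w1 < ξ ∧ ξ < w2 ∧ w1 < v ∧ v < w2 then
    (1 - th γ) ^ 2 / th γ * (cgk γ κ / Jl (lam γ)) * |ξ - v| ^ (2 * lam γ - 1) *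
      Ups (lam γ - 1) (((ξ + v) * (w1 + w2) - 2 * (w1 * w2 + ξ * v)) / ((w2 - w1) * |ξ - v|))
  else 0

/-- kinetic entropy H_S(f,ξ) -/
def HS (γ κ : ℝ) (S : ℝ → ℝ) (f : ℝ × ℝ) (ξ : ℝ) : ℝ :=
  if f = 0 then 0 else ∫ v : ℝ, Phi γ κ (rf γ κ f ξ) (uf γ f ξ) ξ v * S v

/-- kinetic invariant domain D̃_ξ -/
def Dtil (γ κ ωmin ωmax ξ : ℝ) : Set (ℝ × ℝ) :=
  {f | f ∈ Dset ∧ (f = 0 ∨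
    (ωmin ≤ om1 γ κ f ξ ∧ om1 γ κ f ξ ≤ om2 γ κ f ξ ∧ om2 γ κ f ξ ≤ ωmax))}

/-- T_S(ρ,u) (subdifferential of η_S) -/
def TS (γ κ : ℝ) (S : ℝ → ℝ) (ρ u : ℝ) : ℝ × ℝ :=
  ((1 / Jl (lam γ)) * ∫ z in (-1:ℝ)..1, (1 - z ^ 2) ^ lam γ *
      (S (u + ag γ κ * ρ ^ th γ * z)
        + (th γ * ag γ κ * ρ ^ th γ * z - u) * deriv S (u + ag γ κ * ρ ^ th γ * z)),
   (1 / Jl (lam γ)) * ∫ z in (-1:ℝ)..1, (1 - z ^ 2) ^ lam γ *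
      deriv S (u + ag γ κ * ρ ^ th γ * z))

/-- inner product on ℝ² -/
def dot (a b : ℝ × ℝ) : ℝ := a.1 * b.1 + a.2 * b.2


/-! ### Auxiliary lemmas -/

section Aux

lemma lam_pos {γ : ℝ} (hγ : 1 < γ) (hγ' : γ < 3) : 0 < lam γ := by
  unfold lam
  have h1 : 0 < γ - 1 := by linarith
  have : (1:ℝ)/2 < 1/(γ-1) := by
    rw [div_lt_div_iff₀ (by norm_num) h1]; linarith
  linarith

lemma th_pos {γ : ℝ} (hγ : 1 < γ) : 0 < th γ := by unfold th; linarith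

lemma th_lt_one {γ : ℝ} (hγ' : γ < 3) : th γ < 1 := by unfold th; linarith

lemma th_lam {γ : ℝ} (hγ : 1 < γ) : th γ * (2 * lam γ + 1) = 1 := by
  unfold th lam
  have h1 : γ - 1 ≠ 0 := by intro h; rw [show γ = 1 by linarith] at hγ; linarith
  field_simp; ring

lemma two_lam_exp {γ : ℝ} (hγ : 1 < γ) : 2 / (γ - 1) = 2 * lam γ + 1 := by
  unfold lam
  have h1 : γ - 1 ≠ 0 := by intro h; rw [show γ = 1 by linarith] at hγ; linarith
  field_simp; ring

lemma ag_pos {γ κ : ℝ} (hκ : 0 < κ) (hγ : 1 < γ) : 0 < ag γ κ := by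
  unfold ag
  have : 0 < Real.sqrt (γ * κ) := Real.sqrt_pos.2 (by positivity)
  have h1 : (0:ℝ) < γ - 1 := by linarith
  positivity

lemma Jl_pos {γ : ℝ} (hγ : 1 < γ) (hγ' : γ < 3) : 0 < Jl (lam γ) := by
  have hL := lam_pos hγ hγ'
  unfold Jl
  apply intervalIntegral.intervalIntegral_pos_of_pos_on
  · apply Continuous.intervalIntegrable
    apply Continuous.rpow_const (by continuity)
    intro x; right; exact hL.le
  · intro x hx
    apply Real.rpow_pos_of_pos
    have h1 := hx.1; have h2 := hx.2
    nlinarith [sq_nonneg x]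
  · norm_num

lemma cgk_pos {γ κ : ℝ} (hκ : 0 < κ) (hγ : 1 < γ) (hγ' : γ < 3) : 0 < cgk γ κ := by
  unfold cgk
  exact div_pos (Real.rpow_pos_of_pos (ag_pos hκ hγ) _) (Jl_pos hγ hγ')

lemma young_aux {L b g k : ℝ} (hL : 0 < L) (hb : 0 ≤ b) (hg : 0 ≤ g) (hk : 0 < k) :
    b * g ≤ k * g ^ ((L+1)/L) + (L^L/(L+1)^(L+1)) * b^(L+1) * k^(-L) := by
  set p := L + 1 with hp
  set q := (L+1)/L with hq
  have hp1 : 1 < p := by simp [hp]; linarith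
  have hq0 : 0 < q := by positivity
  have hpq : p.HolderConjugate q := by
    rw [Real.holderConjugate_iff_eq_conjExponent hp1, hq, hp]; congr 1; ring
  have hqk : (0:ℝ) < q * k := by positivity
  have key := Real.young_inequality_of_nonneg
    (a := b * (q*k) ^ (-(1/q))) (b := g * (q*k) ^ (1/q))
    (by positivity) (by positivity) hpq
  have hab : b * (q*k) ^ (-(1/q)) * (g * (q*k) ^ (1/q)) = b * g := by
    rw [show b * (q*k) ^ (-(1/q)) * (g * (q*k) ^ (1/q))
        = b * g * ((q*k) ^ (-(1/q)) * (q*k) ^ (1/q)) by ring,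
      ← Real.rpow_add hqk]
    simp
  rw [hab] at key
  have h1 : (g * (q*k) ^ (1/q)) ^ q / q = k * g ^ q := by
    rw [Real.mul_rpow hg (by positivity), ← Real.rpow_mul hqk.le]
    rw [show (1/q) * q = 1 by field_simp]
    rw [Real.rpow_one]
    field_simp
  have h2 : (b * (q*k) ^ (-(1/q))) ^ p / p = (L^L/(L+1)^(L+1)) * b^(L+1) * k^(-L) := by
    rw [Real.mul_rpow hb (by positivity), ← Real.rpow_mul hqk.le]
    have hqp : (-(1/q)) * p = -L := by
      rw [hq, hp]; field_simp
    rw [hqp, Real.mul_rpow hq0.le hk.le]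
    have hqL : q^(-L) = L^L / (L+1)^L := by
      rw [hq, Real.rpow_neg (by positivity), Real.div_rpow (by linarith) hL.le, inv_div]
    rw [hqL, hp, Real.rpow_add_one (by positivity : L + 1 ≠ 0)]
    have h3 : (0:ℝ) < (L+1)^L := by positivity
    field_simp
  rw [h1, h2] at key
  linarith

/-- K' = (1-θ)/(2 c^{1/λ}) -/
def Kp (γ κ : ℝ) : ℝ := (1 - th γ) / (2 * cgk γ κ ^ (1 / lam γ))

/-- constant in the dual bump function -/
def CC (γ κ : ℝ) : ℝ := lam γ ^ lam γ / (lam γ + 1) ^ (lam γ + 1) * Kp γ κ ^ (-(lam γ))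

/-- the dual bump function -/
def bump (γ κ μ A : ℝ) : ℝ :=
  CC γ κ * (max (μ - (1 + th γ) * A / 2) 0) ^ (lam γ + 1) * (max A 0) ^ lam γ

lemma Kp_pos {γ κ : ℝ} (hκ : 0 < κ) (hγ : 1 < γ) (hγ' : γ < 3) : 0 < Kp γ κ := by
  unfold Kp
  have h1 := th_lt_one (γ := γ) hγ'
  have h2 := cgk_pos hκ hγ hγ'
  have : (0:ℝ) < cgk γ κ ^ (1 / lam γ) := Real.rpow_pos_of_pos h2 _
  have h3 : (0:ℝ) < 1 - th γ := by linarith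
  positivity

lemma CC_pos {γ κ : ℝ} (hκ : 0 < κ) (hγ : 1 < γ) (hγ' : γ < 3) : 0 < CC γ κ := by
  unfold CC
  have h1 := lam_pos hγ hγ'
  have h2 := Kp_pos hκ hγ hγ'
  have h3 : (0:ℝ) < Kp γ κ ^ (-(lam γ)) := Real.rpow_pos_of_pos h2 _
  have h4 : (0:ℝ) < lam γ ^ lam γ := Real.rpow_pos_of_pos h1 _
  have h5 : (0:ℝ) < (lam γ + 1) ^ (lam γ + 1) := Real.rpow_pos_of_pos (by linarith) _
  positivity

lemma bump_nonneg {γ κ μ A : ℝ} (hκ : 0 < κ) (hγ : 1 < γ) (hγ' : γ < 3) :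
    0 ≤ bump γ κ μ A := by
  unfold bump
  have h1 := (CC_pos (κ := κ) hκ hγ hγ').le
  have h2 : (0:ℝ) ≤ (max (μ - (1 + th γ) * A / 2) 0) ^ (lam γ + 1) :=
    Real.rpow_nonneg (le_max_right _ _) _
  have h3 : (0:ℝ) ≤ (max A 0) ^ lam γ := Real.rpow_nonneg (le_max_right _ _) _
  positivity

lemma pointwise_upper {γ κ : ℝ} (hκ : 0 < κ) (hγ : 1 < γ) (hγ' : γ < 3)
    {ωmin ωmax ξ μ : ℝ} (hμ : 0 < μ) {f : ℝ × ℝ}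
    (hf : f ∈ Dtil γ κ ωmin ωmax ξ) :
    f.2 ≤ (ωmax - μ) * f.1 + bump γ κ μ (ωmax - ξ) := by
  obtain ⟨hD, hcase⟩ := hf
  by_cases hne : f = 0
  · rw [hne]
    simp only [Prod.fst_zero, Prod.snd_zero, mul_zero, zero_add]
    exact bump_nonneg hκ hγ hγ'
  have hf1 : 0 < f.1 := hD.resolve_right hne
  obtain ⟨hw1, hw12, hw2⟩ := hcase.resolve_left hne
  set T := th γ with hTdef
  set L := lam γ with hLdef
  set a := ag γ κ with hadef
  set c := cgk γ κ with hcdef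
  have hT0 : 0 < T := th_pos hγ
  have hT1 : T < 1 := th_lt_one hγ'
  have h1T : (1:ℝ) - T ≠ 0 := by linarith
  have hL0 : 0 < L := lam_pos hγ hγ'
  have ha0 : 0 < a := ag_pos hκ hγ
  have hc0 : 0 < c := cgk_pos hκ hγ hγ'
  have hγ1 : (0:ℝ) < γ - 1 := by linarith
  set s := (f.2 / f.1 - ξ) / (1 - T) with hsdef
  set P := (f.1 / c) ^ (1 / L) with hPdef
  have hP0 : 0 < P := Real.rpow_pos_of_pos (div_pos hf1 hc0) _
  set B := s ^ 2 + P with hBdef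
  have hB0 : 0 < B := by rw [hBdef]; nlinarith [sq_nonneg s]
  have h_uf : uf γ f ξ = ξ + s := by
    rw [uf, hsdef, ← hTdef]
    field_simp
    ring
  have h_rf : a * rf γ κ f ξ ^ T = Real.sqrt B := by
    rw [rf]
    rw [Real.mul_rpow (Real.rpow_nonneg ha0.le _) (Real.rpow_nonneg hB0.le _)]
    rw [← Real.rpow_mul ha0.le, ← Real.rpow_mul hB0.le]
    have e1 : -(2 / (γ - 1)) * T = -1 := by
      rw [hTdef, th]; field_simp
    have e2 : 1 / (γ - 1) * T = 1 / 2 := by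
      rw [hTdef, th]; field_simp
    rw [e1, e2, Real.rpow_neg_one, Real.sqrt_eq_rpow]
    rw [← mul_assoc, mul_inv_cancel₀ ha0.ne']
    ring
  have hw2' : ξ + s + Real.sqrt B ≤ ωmax := by
    rw [om2, h_uf, h_rf] at hw2; linarith
  have habs : |s| < Real.sqrt B := by
    rw [← Real.sqrt_sq_eq_abs]
    apply Real.sqrt_lt_sqrt (sq_nonneg s)
    rw [hBdef]; linarith
  have hA0 : 0 < ωmax - ξ := by
    have := neg_abs_le s
    have hsq := Real.sqrt_nonneg B
    nlinarith
  have hs2 : 2 * (ωmax - ξ) * s ≤ (ωmax - ξ) ^ 2 - P := by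
    have h1 : Real.sqrt B ≤ (ωmax - ξ) - s := by linarith
    have h2 : Real.sqrt B ^ 2 ≤ ((ωmax - ξ) - s) ^ 2 := by
      apply pow_le_pow_left₀ (Real.sqrt_nonneg B) h1
    rw [Real.sq_sqrt hB0.le, hBdef] at h2
    nlinarith
  have hv : f.2 = ((1 - T) * s + ξ) * f.1 := by
    rw [hsdef]
    field_simp
    ring
  have hcL : c ^ (1/L) ≠ 0 := (Real.rpow_pos_of_pos hc0 _).ne'
  have hq1 : f.1 ^ ((L+1)/L) = f.1 ^ (1/L) * f.1 := by
    rw [show (L+1)/L = 1/L + 1 by field_simp; ring, Real.rpow_add hf1, Real.rpow_one]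
  have hPf : P * f.1 = f.1 ^ (1/L) / c ^ (1/L) * f.1 := by
    rw [hPdef, Real.div_rpow hf1.le hc0.le]
  have hKpg : Kp γ κ * f.1 ^ ((L+1)/L) = (1 - T) * (P * f.1) / 2 := by
    rw [Kp, ← hTdef, ← hLdef, ← hcdef, hq1, hPf]
    field_simp
  have hstep1 : f.2 ≤ ωmax * f.1 - (1+T) * (ωmax - ξ) * f.1 / 2
      - Kp γ κ * f.1 ^ ((L+1)/L) / (ωmax - ξ) := by
    rw [hv, hKpg]
    rw [← sub_nonneg]
    have key : 0 ≤ (1 - T) * f.1 * ((ωmax - ξ)^2 - P - 2*(ωmax - ξ)*s) / (2*(ωmax - ξ)) := by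
      apply div_nonneg _ (by linarith)
      apply mul_nonneg (mul_nonneg (by linarith) hf1.le)
      linarith
    have heq : ωmax * f.1 - (1+T) * (ωmax - ξ) * f.1 / 2 - (1 - T) * (P * f.1) / 2 / (ωmax - ξ)
        - ((1 - T) * s + ξ) * f.1
        = (1 - T) * f.1 * ((ωmax - ξ)^2 - P - 2*(ωmax - ξ)*s) / (2*(ωmax - ξ)) := by
      field_simp
      ring
    rw [heq]
    exact key
  set b := max (μ - (1 + T) * (ωmax - ξ) / 2) 0 with hbdef
  have hKpos := Kp_pos (γ := γ) (κ := κ) hκ hγ hγ'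
  have hyoung := young_aux (b := b) (g := f.1) (k := Kp γ κ / (ωmax - ξ)) hL0
    (le_max_right _ _) hf1.le (div_pos hKpos hA0)
  have hb1 : μ - (1+T) * (ωmax - ξ) / 2 ≤ b := le_max_left _ _
  have hKA : (Kp γ κ / (ωmax - ξ)) ^ (-L) = Kp γ κ ^ (-L) * (ωmax - ξ) ^ L := by
    rw [Real.div_rpow hKpos.le hA0.le, Real.rpow_neg hKpos.le, Real.rpow_neg hA0.le]
    field_simp
  have hbump : bump γ κ μ (ωmax - ξ) = CC γ κ * b ^ (L+1) * (ωmax - ξ) ^ L := by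
    rw [bump, hbdef, ← hTdef, ← hLdef]
    congr 2
    rw [max_eq_left hA0.le]
  have e3 : Kp γ κ / (ωmax - ξ) * f.1 ^ ((L+1)/L)
      = Kp γ κ * f.1 ^ ((L+1)/L) / (ωmax - ξ) := by ring
  have e4 : L^L/(L+1)^(L+1) * b^(L+1) * (Kp γ κ ^ (-L) * (ωmax - ξ)^L)
      = (L^L/(L+1)^(L+1) * Kp γ κ ^ (-L)) * b^(L+1) * (ωmax - ξ)^L := by ring
  rw [hKA, e3, e4] at hyoung
  have h1 : (μ - (1+T) * (ωmax - ξ) / 2) * f.1 ≤ b * f.1 :=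
    mul_le_mul_of_nonneg_right hb1 hf1.le
  have hCC : CC γ κ = L^L/(L+1)^(L+1) * Kp γ κ ^ (-L) := by
    rw [CC, ← hLdef]
  rw [hbump, hCC]
  linarith [hyoung, h1, hstep1]

lemma rpow_succ {x l : ℝ} (hx : 0 ≤ x) (hl : 0 < l) : x ^ (l + 1) = x ^ l * x := by
  rcases eq_or_lt_of_le hx with h | h
  · rw [← h, Real.zero_rpow (by linarith), Real.zero_rpow hl.ne', zero_mul]
  · rw [Real.rpow_add_one h.ne']

lemma cont_rpow {l : ℝ} (hl : 0 ≤ l) (g : ℝ → ℝ) (hg : Continuous g) :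
    Continuous fun x => g x ^ l := Continuous.rpow_const hg (fun _ => Or.inr hl)

lemma Ibase {l : ℝ} (hl : 0 < l) :
    ∫ t : ℝ, (max (1-t) 0) ^ (l+1) * (max t 0) ^ l = Jl l / (4 * 4 ^ l) := by
  have hl1 : 0 < l + 1 := by linarith
  have hvanish : ∀ t ∉ Ioc (0:ℝ) 1, (max (1-t) 0) ^ (l+1) * (max t 0) ^ l = 0 := by
    intro t ht
    simp only [mem_Ioc, not_and_or, not_lt, not_le] at ht
    rcases ht with h | h
    · rw [max_eq_right h, Real.zero_rpow hl.ne', mul_zero]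
    · rw [max_eq_right (by linarith), Real.zero_rpow hl1.ne', zero_mul]
  rw [← setIntegral_eq_integral_of_forall_compl_eq_zero hvanish]
  rw [← intervalIntegral.integral_of_le (by norm_num : (0:ℝ) ≤ 1)]
  have hcongr : ∫ t in (0:ℝ)..1, (max (1-t) 0) ^ (l+1) * (max t 0) ^ l
      = ∫ t in (0:ℝ)..1, (1-t) ^ (l+1) * t ^ l := by
    apply intervalIntegral.integral_congr
    intro t ht
    rw [uIcc_of_le (by norm_num : (0:ℝ) ≤ 1)] at ht
    dsimp only
    rw [max_eq_left (by linarith [ht.2] : (0:ℝ) ≤ 1 - t), max_eq_left ht.1]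
  rw [hcongr]
  have h4 : (0:ℝ) < 4 ^ l := Real.rpow_pos_of_pos (by norm_num) _
  have hcI1 : Continuous fun t : ℝ => (1-t)^(l+1) * t^l :=
    ((cont_rpow hl1.le _ (by continuity)).mul (cont_rpow hl.le _ continuous_id))
  have hcI2 : Continuous fun t : ℝ => (1-t)^l * t^(l+1) :=
    ((cont_rpow hl.le _ (by continuity)).mul (cont_rpow hl1.le _ continuous_id))
  have hcomp := intervalIntegral.integral_comp_mul_add (a := 0) (b := 1)
    (f := fun z : ℝ => (1-z^2)^l) (by norm_num : (2:ℝ) ≠ 0) (-1)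
  norm_num at hcomp
  have hJK : Jl l = 2 * ∫ t in (0:ℝ)..1, 4^l * ((1-t)*t)^l := by
    have hcongr2 : ∫ t in (0:ℝ)..1, (1-(2*t + -1)^2)^l
        = ∫ t in (0:ℝ)..1, 4^l * ((1-t)*t)^l := by
      apply intervalIntegral.integral_congr
      intro t ht
      rw [uIcc_of_le (by norm_num : (0:ℝ) ≤ 1)] at ht
      dsimp only
      rw [show 1-(2*t + -1)^2 = 4*((1-t)*t) by ring,
        Real.mul_rpow (by norm_num) (mul_nonneg (by linarith [ht.2]) ht.1)]
    rw [← hcongr2, Jl]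
    linarith [hcomp]
  have hsym : ∫ t in (0:ℝ)..1, (1-t)^l * t^(l+1) = ∫ t in (0:ℝ)..1, (1-t)^(l+1) * t^l := by
    have hc := intervalIntegral.integral_comp_sub_left (a := 0) (b := 1)
      (fun t : ℝ => (1-t)^l * t^(l+1)) 1
    norm_num at hc
    rw [← hc]
    apply intervalIntegral.integral_congr
    intro t ht
    dsimp only
    ring_nf
  have hsplit : ∫ t in (0:ℝ)..1, 4^l * ((1-t)*t)^l
      = 4^l * ((∫ t in (0:ℝ)..1, (1-t)^(l+1) * t^l) + ∫ t in (0:ℝ)..1, (1-t)^l * t^(l+1)) := by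
    rw [← intervalIntegral.integral_add (hcI1.intervalIntegrable 0 1)
      (hcI2.intervalIntegrable 0 1)]
    rw [← intervalIntegral.integral_const_mul]
    apply intervalIntegral.integral_congr
    intro t ht
    rw [uIcc_of_le (by norm_num : (0:ℝ) ≤ 1)] at ht
    dsimp only
    rw [Real.mul_rpow (by linarith [ht.2] : (0:ℝ) ≤ 1 - t) ht.1,
      rpow_succ (by linarith [ht.2] : (0:ℝ) ≤ 1 - t) hl, rpow_succ ht.1 hl]
    ring
  rw [hsplit, hsym] at hJK
  rw [hJK]
  field_simp
  ring

lemma max_mul_nonneg {a x : ℝ} (ha : 0 ≤ a) : max (a * x) 0 = a * max x 0 := by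
  rcases le_total x 0 with h | h
  · rw [max_eq_right h, max_eq_right (mul_nonpos_of_nonneg_of_nonpos ha h), mul_zero]
  · rw [max_eq_left h, max_eq_left (mul_nonneg ha h)]

lemma bump_scale {l c μ : ℝ} (hl : 0 < l) (hc : 0 < c) (hμ : 0 < μ) :
    ∫ A : ℝ, (max (μ - c * A) 0) ^ (l+1) * (max A 0) ^ l
      = (μ/c) ^ (l+1) * μ^(l+1) * (Jl l / (4*4^l)) := by
  set β := μ / c with hβdef
  have hβ : 0 < β := div_pos hμ hc
  have hcm := MeasureTheory.Measure.integral_comp_mul_left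
    (fun A : ℝ => (max (μ - c * A) 0) ^ (l+1) * (max A 0) ^ l) β
  rw [abs_of_pos (inv_pos.2 hβ), smul_eq_mul] at hcm
  have h2 : ∫ x : ℝ, (fun A : ℝ => (max (μ - c * A) 0) ^ (l+1) * (max A 0) ^ l) (β * x)
      = μ^(l+1) * β^l * ∫ x : ℝ, (max (1-x) 0) ^ (l+1) * (max x 0) ^ l := by
    rw [← MeasureTheory.integral_const_mul]
    congr 1
    funext x
    dsimp only
    have e1 : μ - c * (β * x) = μ * (1 - x) := by
      rw [hβdef]; field_simp
    rw [e1, max_mul_nonneg hμ.le, max_mul_nonneg hβ.le,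
      Real.mul_rpow hμ.le (le_max_right _ _), Real.mul_rpow hβ.le (le_max_right _ _)]
    ring
  rw [h2, Ibase hl] at hcm
  have h3 : (∫ A : ℝ, (max (μ - c * A) 0) ^ (l+1) * (max A 0) ^ l)
      = β * (μ ^ (l + 1) * β ^ l * (Jl l / (4 * 4 ^ l))) := by
    rw [hcm]; field_simp
  rw [h3, rpow_succ hβ.le hl]
  ring

lemma bump_comp_integrable {l c μ : ℝ} (hl : 0 < l) (hc : 0 < c) (hμ : 0 < μ) (w : ℝ) :
    Integrable (fun ξ : ℝ => (max (μ - c*(w-ξ)) 0)^(l+1) * (max (w-ξ) 0)^l) := by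
  apply Continuous.integrable_of_hasCompactSupport
  · exact (cont_rpow (by linarith : (0:ℝ) ≤ l+1) _ (by continuity)).mul
      (cont_rpow hl.le _ (by continuity))
  · apply HasCompactSupport.intro (isCompact_Icc (a := w - μ/c) (b := w))
    intro ξ hξ
    simp only [mem_Icc, not_and_or, not_le] at hξ
    rcases hξ with h | h
    · have h1 : μ - c*(w-ξ) < 0 := by
        have : μ / c < w - ξ := by linarith
        have := (div_lt_iff₀ hc).1 this
        nlinarith
      rw [max_eq_right h1.le, Real.zero_rpow (by linarith : l + 1 ≠ 0), zero_mul]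
    · rw [max_eq_right (by linarith : w - ξ ≤ 0), Real.zero_rpow hl.ne', mul_zero]

lemma bump_comp_integral {l c μ : ℝ} (hl : 0 < l) (hc : 0 < c) (hμ : 0 < μ) (w : ℝ) :
    ∫ ξ : ℝ, (max (μ - c*(w-ξ)) 0)^(l+1) * (max (w-ξ) 0)^l
      = (μ/c) ^ (l+1) * μ^(l+1) * (Jl l / (4*4^l)) := by
  rw [← bump_scale hl hc hμ]
  exact integral_sub_left_eq_self
    (fun A : ℝ => (max (μ - c*A) 0)^(l+1) * (max A 0)^l) volume w

lemma const_core {L a J : ℝ} (hL : 0 < L) (ha : 0 < a) (hJ : 0 < J) :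
    (L^L/(L+1)^(L+1) * ((2*L/(2*L+1))/(2*(a^(-(2*L+1))/J)^(1/L)))^(-L))
      * ((2/(2*(L+1)/(2*L+1)))^(L+1) * (J/(4*4^L))) * (a*(2*(L+1)/(2*L+1)))^(2*L+2)
      = a * (1/(2*L+1)) := by
  have hL1 : 0 < L + 1 := by linarith
  have h2L1 : 0 < 2*L+1 := by linarith
  have hX : (0:ℝ) < (L^L/(L+1)^(L+1) * ((2*L/(2*L+1))/(2*(a^(-(2*L+1))/J)^(1/L)))^(-L))
      * ((2/(2*(L+1)/(2*L+1)))^(L+1) * (J/(4*4^L))) * (a*(2*(L+1)/(2*L+1)))^(2*L+2) := by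
    positivity
  have hY : (0:ℝ) < a * (1/(2*L+1)) := by positivity
  rw [← Real.exp_log hX, ← Real.exp_log hY]
  congr 1
  have hlog4 : Real.log 4 = 2 * Real.log 2 := by
    rw [show (4:ℝ) = 2^2 by norm_num, Real.log_pow]; push_cast; ring
  simp (disch := positivity) only [Real.log_mul, Real.log_div, Real.log_rpow, Real.log_inv,
    Real.log_one]
  rw [hlog4]
  field_simp
  ring

lemma const_id {γ κ : ℝ} (hκ : 0 < κ) (hγ : 1 < γ) (hγ' : γ < 3) :
    CC γ κ * ((2/(1+th γ))^(lam γ+1) * (Jl (lam γ)/(4*4^lam γ)))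
      * (ag γ κ*(1+th γ))^(2*lam γ+2) = ag γ κ * th γ := by
  have hL0 := lam_pos hγ hγ'
  have hT' : th γ = 1/(2*lam γ+1) := by
    have h := th_lam (γ := γ) hγ
    field_simp
    linarith
  rw [CC, Kp, cgk, two_lam_exp hγ, hT']
  rw [show (1:ℝ) - 1/(2*lam γ+1) = 2*lam γ/(2*lam γ+1) by field_simp; ring,
    show (1:ℝ) + 1/(2*lam γ+1) = 2*(lam γ+1)/(2*lam γ+1) by field_simp; ring]
  exact const_core hL0 (ag_pos hκ hγ) (Jl_pos hγ hγ')

lemma key_upper {γ κ : ℝ} (hκ : 0 < κ) (hγ : 1 < γ) (hγ' : γ < 3) {ωmin ωmax : ℝ}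
    {f : ℝ → ℝ × ℝ} (hfi : Integrable f)
    (hfD : ∀ᵐ ξ : ℝ, f ξ ∈ Dtil γ κ ωmin ωmax ξ)
    {ρ u : ℝ} (hρ : ρ = ∫ ξ : ℝ, (f ξ).1) (hu : ρ * u = ∫ ξ : ℝ, (f ξ).2)
    (hρ0 : 0 < ρ) : u + ag γ κ * ρ ^ th γ ≤ ωmax := by
  have hT0 := th_pos (γ := γ) hγ
  have hT1 := th_lt_one (γ := γ) hγ'
  have hL0 := lam_pos hγ hγ'
  have ha0 := ag_pos (κ := κ) hκ hγ
  have hc2 : 0 < (1 + th γ)/2 := by linarith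
  have hρT : 0 < ρ ^ th γ := Real.rpow_pos_of_pos hρ0 _
  set μ := ag γ κ * (1 + th γ) * ρ ^ th γ with hμdef
  have hμ0 : 0 < μ := by
    rw [hμdef]; positivity
  have hbump_eq : ∀ A : ℝ, bump γ κ μ A
      = CC γ κ * ((max (μ - (1+th γ)/2*A) 0)^(lam γ+1) * (max A 0)^(lam γ)) := by
    intro A
    rw [bump, show (1+th γ)*A/2 = (1+th γ)/2*A by ring]
    ring
  have hBint : Integrable (fun ξ : ℝ => bump γ κ μ (ωmax - ξ)) := by
    simp only [hbump_eq]
    exact (bump_comp_integrable hL0 hc2 hμ0 ωmax).const_mul _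
  have hfst : Integrable (fun ξ : ℝ => (f ξ).1) :=
    (ContinuousLinearMap.fst ℝ ℝ ℝ).integrable_comp hfi
  have hsnd : Integrable (fun ξ : ℝ => (f ξ).2) :=
    (ContinuousLinearMap.snd ℝ ℝ ℝ).integrable_comp hfi
  have hmono : ρ * u ≤ ∫ ξ : ℝ, ((ωmax - μ) * (f ξ).1 + bump γ κ μ (ωmax - ξ)) := by
    rw [hu]
    apply integral_mono_ae hsnd ((hfst.const_mul _).add hBint)
    filter_upwards [hfD] with ξ hξ
    exact pointwise_upper hκ hγ hγ' hμ0 hξ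
  rw [integral_add (hfst.const_mul _) hBint, MeasureTheory.integral_const_mul] at hmono
  have hbint : ∫ ξ : ℝ, bump γ κ μ (ωmax - ξ)
      = CC γ κ * ((μ/((1+th γ)/2))^(lam γ+1) * μ^(lam γ+1) * (Jl (lam γ)/(4*4^(lam γ)))) := by
    simp only [hbump_eq]
    rw [MeasureTheory.integral_const_mul, bump_comp_integral hL0 hc2 hμ0 ωmax]
  rw [hbint, ← hρ] at hmono
  have hval : CC γ κ * ((μ/((1+th γ)/2))^(lam γ+1) * μ^(lam γ+1) * (Jl (lam γ)/(4*4^(lam γ))))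
      = ag γ κ * th γ * ρ ^ (th γ + 1) := by
    have h1 : μ/((1+th γ)/2) = (2/(1+th γ)) * μ := by
      field_simp
    rw [h1, Real.mul_rpow (by positivity) hμ0.le]
    have h2 : μ ^ (lam γ+1) * μ ^ (lam γ+1) = μ ^ (2*lam γ+2) := by
      rw [← Real.rpow_add hμ0]; ring_nf
    have h3 : μ ^ (2*lam γ+2) = (ag γ κ * (1+th γ))^(2*lam γ+2) * ρ ^ (th γ+1) := by
      rw [hμdef, Real.mul_rpow (by positivity) hρT.le, ← Real.rpow_mul hρ0.le]
      have : th γ * (2*lam γ+2) = th γ + 1 := by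
        have h := th_lam (γ := γ) hγ
        nlinarith
      rw [this]
    calc CC γ κ * ((2/(1+th γ))^(lam γ+1) * μ ^ (lam γ+1) * μ^(lam γ+1)
          * (Jl (lam γ)/(4*4^(lam γ))))
        = CC γ κ * ((2/(1+th γ))^(lam γ+1) * (Jl (lam γ)/(4*4^(lam γ))))
          * (μ ^ (lam γ+1) * μ^(lam γ+1)) := by ring
      _ = CC γ κ * ((2/(1+th γ))^(lam γ+1) * (Jl (lam γ)/(4*4^(lam γ))))
          * ((ag γ κ * (1+th γ))^(2*lam γ+2) * ρ ^ (th γ+1)) := by rw [h2, h3]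
      _ = (CC γ κ * ((2/(1+th γ))^(lam γ+1) * (Jl (lam γ)/(4*4^(lam γ))))
          * (ag γ κ * (1+th γ))^(2*lam γ+2)) * ρ ^ (th γ+1) := by ring
      _ = ag γ κ * th γ * ρ ^ (th γ + 1) := by rw [const_id hκ hγ hγ']
  rw [hval] at hmono
  have hfinal : ρ * u + ag γ κ * ρ ^ th γ * ρ ≤ ωmax * ρ := by
    have e : (ωmax - μ) * ρ + ag γ κ * th γ * ρ ^ (th γ + 1)
        = ωmax * ρ - ag γ κ * ρ ^ th γ * ρ := by
      rw [hμdef, rpow_succ hρ0.le hT0]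
      ring
    linarith [hmono, e.symm.le]
  have : (u + ag γ κ * ρ ^ th γ) * ρ ≤ ωmax * ρ := by linarith
  exact le_of_mul_le_mul_right this hρ0

lemma Dtil_reflect {γ κ : ℝ} (hγ : 1 < γ) {ωmin ωmax ξ : ℝ} {f : ℝ × ℝ}
    (hf : f ∈ Dtil γ κ ωmin ωmax ξ) :
    (f.1, -f.2) ∈ Dtil γ κ (-ωmax) (-ωmin) (-ξ) := by
  obtain ⟨hD, hcase⟩ := hf
  by_cases hne : f = 0
  · subst hne
    constructor
    · right; simp [Prod.ext_iff]
    · left; simp [Prod.ext_iff]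
  have hf1 : 0 < f.1 := hD.resolve_right hne
  obtain ⟨hw1, hw12, hw2⟩ := hcase.resolve_left hne
  have hne2 : (f.1, -f.2) ≠ 0 := by
    simp only [Prod.ext_iff, Prod.fst_zero, Prod.snd_zero, ne_eq, not_and_or]
    left; exact hf1.ne'
  have huf : uf γ (f.1, -f.2) (-ξ) = - uf γ f ξ := by
    rw [uf, uf]
    simp only
    ring_nf
  have hrf : rf γ κ (f.1, -f.2) (-ξ) = rf γ κ f ξ := by
    rw [rf, rf]
    simp only
    congr 2
    ring
  have h1 : om1 γ κ (f.1, -f.2) (-ξ) = - om2 γ κ f ξ := by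
    rw [om1, om2, huf, hrf]; ring
  have h2 : om2 γ κ (f.1, -f.2) (-ξ) = - om1 γ κ f ξ := by
    rw [om2, om1, huf, hrf]; ring
  constructor
  · left; exact hf1
  · right
    rw [h1, h2]
    exact ⟨by linarith, by linarith, by linarith⟩

end Aux

theorem stmt13 (γ κ : ℝ) (hκ : 0 < κ) (hγ : 1 < γ) (hγ' : γ < 3)
    (ωmin ωmax : ℝ) (hω : ωmin < ωmax)
    (f : ℝ → ℝ × ℝ) (hfi : Integrable f)
    (hfD : ∀ᵐ ξ : ℝ, f ξ ∈ Dtil γ κ ωmin ωmax ξ)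
    (ρ u : ℝ) (hρ : ρ = ∫ ξ : ℝ, (f ξ).1) (hu : ρ * u = ∫ ξ : ℝ, (f ξ).2) :
    ρ = 0 ∨ (ωmin ≤ u - ag γ κ * ρ ^ th γ ∧ u + ag γ κ * ρ ^ th γ ≤ ωmax) := by
  have hρ0 : 0 ≤ ρ := by
    rw [hρ]
    apply integral_nonneg_of_ae
    filter_upwards [hfD] with ξ hξ
    rcases hξ.1 with h | h
    · exact h.le
    · rw [h]; exact le_refl _
  rcases eq_or_lt_of_le hρ0 with h0 | h0
  · left; exact h0.symm
  right
  refine ⟨?_, key_upper hκ hγ hγ' hfi hfD hρ hu h0⟩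
  -- lower bound via reflection
  have hmp : MeasurePreserving (fun ξ : ℝ => -ξ) volume volume :=
    ⟨measurable_neg, Measure.map_neg_eq_self volume⟩
  set g : ℝ → ℝ × ℝ := fun ξ => ((f (-ξ)).1, -(f (-ξ)).2) with hgdef
  have h1 : Integrable (fun ξ : ℝ => f (-ξ)) :=
    (hmp.integrable_comp_emb measurableEmbedding_neg).2 hfi
  have hgi : Integrable g :=
    ((ContinuousLinearMap.fst ℝ ℝ ℝ).integrable_comp h1).prodMk
      (((ContinuousLinearMap.snd ℝ ℝ ℝ).integrable_comp h1).neg)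
  have hgD : ∀ᵐ ξ : ℝ, g ξ ∈ Dtil γ κ (-ωmax) (-ωmin) ξ := by
    filter_upwards [hmp.quasiMeasurePreserving.ae hfD] with ξ hξ
    have h2 := Dtil_reflect hγ hξ
    rw [neg_neg] at h2
    exact h2
  have hgρ : ρ = ∫ ξ : ℝ, (g ξ).1 := by
    rw [hρ, hgdef]
    exact (integral_neg_eq_self (fun ξ : ℝ => (f ξ).1) volume).symm
  have hgu : ρ * (-u) = ∫ ξ : ℝ, (g ξ).2 := by
    rw [hgdef]
    simp only
    rw [integral_neg, integral_neg_eq_self (fun ξ : ℝ => (f ξ).2) volume, ← hu]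
    ring
  have hkey := key_upper hκ hγ hγ' hgi hgD hgρ hgu h0
  linarith
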